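/- Assume every C_i and C'_i is Clifford. Then there exists a phase φ ∈ ℝ such that F'(U⃗_σ) = e^{iφ} F(U⃗) for every sequence U⃗ = (U_1,…,U_m) of 2×2 unitary matrices if and only if there exists φ ∈ ℝ such that all of the following hold: (a) C'_{m:0} = e^{iφ} C_{m:0}; (b) for every pair (i,j) with σ(j) = i, V_i(X) = V'_j(X) and V_i(Z) = V'_j(Z); and (c) for every pair of indices r < r' with σ^{-1}(r) > σ^{-1}(r') and every P, P' ∈ 𝒫, V_r(P) V_{r'}(P') = V_{r'}(P') V_r(P). -/

import Mathlib

open Matrix Complex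

noncomputable section

namespace QEC

/-- The space of `n`-qubit operators: `2^n × 2^n` complex matrices, with the
index set realized as `Fin n → Fin 2`. -/
abbrev QMat (n : ℕ) := Matrix (Fin n → Fin 2) (Fin n → Fin 2) ℂ

/-- The Pauli `X` matrix. -/
def PX : Matrix (Fin 2) (Fin 2) ℂ := !![0, 1; 1, 0]

/-- The Pauli `Y` matrix. -/
def PY : Matrix (Fin 2) (Fin 2) ℂ := !![0, -Complex.I; Complex.I, 0]

/-- The Pauli `Z` matrix. -/
def PZ : Matrix (Fin 2) (Fin 2) ℂ := !![1, 0; 0, -1]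

/-- The four single-qubit Pauli matrices `𝒫 = {I, X, Y, Z}`, indexed by `Fin 4`. -/
def pauli : Fin 4 → Matrix (Fin 2) (Fin 2) ℂ := ![1, PX, PY, PZ]

/-- `A^{(k)} = I^{⊗(k-1)} ⊗ A ⊗ I^{⊗(n-k)}`: the single-qubit operator `A`
acting on the `k`-th qubit of an `n`-qubit system. -/
def embed {n : ℕ} (k : Fin n) (A : Matrix (Fin 2) (Fin 2) ℂ) : QMat n :=
  fun x y => A (x k) (y k) * ∏ q ∈ Finset.univ.erase k, (if x q = y q then (1 : ℂ) else 0)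

/-- The Kronecker product `P 0 ⊗ P 1 ⊗ ⋯ ⊗ P (n-1)` of `n` single-qubit operators. -/
def kron {n : ℕ} (P : Fin n → Matrix (Fin 2) (Fin 2) ℂ) : QMat n :=
  fun x y => ∏ q, P q (x q) (y q)

/-- The circuit `F(A⃗) = C_m A_m^{(k_m)} C_{m-1} ⋯ C_1 A_1^{(k_1)} C_0`
(here the layers are indexed by `Fin m`, with `i : Fin m` standing for layer `i+1`). -/
def circuit {n m : ℕ} (C : Fin (m + 1) → QMat n) (k : Fin m → Fin n)
    (A : Fin m → Matrix (Fin 2) (Fin 2) ℂ) : QMat n :=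
  ((List.ofFn fun i : Fin m => C i.succ * embed (k i) (A i)).reverse).prod * C 0

/-- The cumulative product `C_{m:i} = C_m C_{m-1} ⋯ C_i`. -/
def Ccum {n m : ℕ} (C : Fin (m + 1) → QMat n) (i : Fin (m + 1)) : QMat n :=
  (((List.ofFn C).reverse).take (m + 1 - (i : ℕ))).prod

/-- `V_i(P) = C_{m:i} P^{(k_i)} C_{m:i}^†` (with `i : Fin m` standing for layer `i+1`). -/
def Vop {n m : ℕ} (C : Fin (m + 1) → QMat n) (k : Fin m → Fin n) (i : Fin m)
    (P : Matrix (Fin 2) (Fin 2) ℂ) : QMat n :=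
  Ccum C i.succ * embed (k i) P * (Ccum C i.succ)ᴴ

/-- `W(P⃗) = V_m(P_m) V_{m-1}(P_{m-1}) ⋯ V_1(P_1)`. -/
def Wop {n m : ℕ} (C : Fin (m + 1) → QMat n) (k : Fin m → Fin n)
    (P : Fin m → Matrix (Fin 2) (Fin 2) ℂ) : QMat n :=
  ((List.ofFn fun i : Fin m => Vop C k i (P i)).reverse).prod

/-- The global phase `e^{iφ}`. -/
def phase (φ : ℝ) : ℂ := Complex.exp ((φ : ℂ) * Complex.I)

/-- A unitary `C` is Clifford when it maps every Pauli string to a signed Pauli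
string under conjugation. -/
def IsClifford {n : ℕ} (C : QMat n) : Prop :=
  ∀ Q : Fin n → Fin 4, ∃ (ε : ℂ) (Q' : Fin n → Fin 4), (ε = 1 ∨ ε = -1) ∧
    C * kron (fun q => pauli (Q q)) * Cᴴ = ε • kron (fun q => pauli (Q' q))


lemma kron_mul {n : ℕ} (P Q : Fin n → Matrix (Fin 2) (Fin 2) ℂ) :
    kron P * kron Q = kron (fun q => P q * Q q) := by
  ext x y
  simp only [kron, Matrix.mul_apply]
  rw [Fintype.prod_sum]
  apply Finset.sum_congr rfl
  intro z _
  rw [← Finset.prod_mul_distrib]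

lemma kron_one {n : ℕ} : kron (fun _ : Fin n => (1 : Matrix (Fin 2) (Fin 2) ℂ)) = 1 := by
  ext x y
  simp only [kron, Matrix.one_apply]
  by_cases h : x = y
  · simp [h]
  · obtain ⟨q, hq⟩ := Function.ne_iff.mp h
    rw [if_neg h]
    exact Finset.prod_eq_zero (Finset.mem_univ q) (by simp [Matrix.one_apply, hq])

lemma embed_eq_kron {n : ℕ} (k : Fin n) (A : Matrix (Fin 2) (Fin 2) ℂ) :
    embed k A = kron (fun q => if q = k then A else 1) := by
  ext x y
  simp only [embed, kron]
  rw [← Finset.mul_prod_erase Finset.univ _ (Finset.mem_univ k)]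
  simp only [if_pos rfl]
  congr 1
  apply Finset.prod_congr rfl
  intro q hq
  rw [if_neg (Finset.ne_of_mem_erase hq), Matrix.one_apply]

lemma embed_one {n : ℕ} (k : Fin n) : embed k (1 : Matrix (Fin 2) (Fin 2) ℂ) = 1 := by
  rw [embed_eq_kron]
  simp only [ite_self]
  exact kron_one

lemma embed_mul {n : ℕ} (k : Fin n) (A B : Matrix (Fin 2) (Fin 2) ℂ) :
    embed k (A * B) = embed k A * embed k B := by
  rw [embed_eq_kron, embed_eq_kron, embed_eq_kron, kron_mul]
  apply congrArg kron
  funext q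
  by_cases h : q = k <;> simp [h]

lemma embed_smul {n : ℕ} (k : Fin n) (c : ℂ) (A : Matrix (Fin 2) (Fin 2) ℂ) :
    embed k (c • A) = c • embed k A := by
  ext x y
  simp [embed, mul_assoc]

lemma embed_add {n : ℕ} (k : Fin n) (A B : Matrix (Fin 2) (Fin 2) ℂ) :
    embed k (A + B) = embed k A + embed k B := by
  ext x y
  simp [embed, add_mul]

lemma Ccum_mem {n m : ℕ} (C : Fin (m + 1) → QMat n)
    (hC : ∀ i, C i ∈ Matrix.unitaryGroup (Fin n → Fin 2) ℂ) (i : Fin (m + 1)) :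
    Ccum C i ∈ Matrix.unitaryGroup (Fin n → Fin 2) ℂ := by
  apply Submonoid.list_prod_mem
  intro x hx
  have hx' : x ∈ List.ofFn C := List.mem_reverse.mp (List.mem_of_mem_take hx)
  obtain ⟨j, rfl⟩ := List.mem_ofFn.mp hx'
  exact hC j

lemma Ccum_zero {n m : ℕ} (C : Fin (m + 1) → QMat n) :
    Ccum C 0 = ((List.ofFn C).reverse).prod := by
  unfold Ccum
  rw [show ((0 : Fin (m+1)) : ℕ) = 0 from rfl, Nat.sub_zero]
  rw [List.take_of_length_le (by simp)]

lemma Ccum_drop {n m : ℕ} (C : Fin (m + 1) → QMat n) (i : Fin (m + 1)) :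
    Ccum C i = (((List.ofFn C).drop (i : ℕ)).reverse).prod := by
  unfold Ccum
  congr 1
  rw [List.take_reverse]
  congr 2
  have hi := Nat.le_of_lt_succ i.isLt
  simp only [List.length_ofFn]
  omega

lemma drop_ofFn_succ {α : Type*} {m : ℕ} (f : Fin (m + 1) → α) (t : ℕ) :
    (List.ofFn f).drop (t + 1) = (List.ofFn (f ∘ Fin.succ)).drop t := by
  rw [List.ofFn_succ, List.drop_succ_cons]
  rfl

lemma Ccum_zero_cons {n m : ℕ} (C : Fin (m + 1) → QMat n) :
    Ccum C 0 = ((List.ofFn (C ∘ Fin.succ)).reverse).prod * C 0 := by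
  rw [Ccum_zero, List.ofFn_succ]
  simp [mul_assoc]
  rfl

lemma Ccum_zero_succ {n m : ℕ} (C : Fin (m + 2) → QMat n) :
    Ccum C 0 = Ccum (C ∘ Fin.succ) 0 * C 0 := by
  rw [Ccum_zero_cons C, ← Ccum_zero]

lemma star_mul_self_of_mem {N : Type*} [Fintype N] [DecidableEq N]
    {A : Matrix N N ℂ} (h : A ∈ Matrix.unitaryGroup N ℂ) : Aᴴ * A = 1 := by
  have := h.1
  rwa [Matrix.star_eq_conjTranspose] at this

lemma mul_star_self_of_mem {N : Type*} [Fintype N] [DecidableEq N]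
    {A : Matrix N N ℂ} (h : A ∈ Matrix.unitaryGroup N ℂ) : A * Aᴴ = 1 := by
  have := h.2
  rwa [Matrix.star_eq_conjTranspose] at this

set_option maxHeartbeats 400000 in
lemma circuit_eq_Wop {n : ℕ} : ∀ {m : ℕ} (C : Fin (m + 1) → QMat n)
    (k : Fin m → Fin n) (U : Fin m → Matrix (Fin 2) (Fin 2) ℂ),
    (∀ i : Fin m, C i.succ ∈ Matrix.unitaryGroup (Fin n → Fin 2) ℂ) →
    circuit C k U = Wop C k U * Ccum C 0 := by
  intro m
  induction m with
  | zero =>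
    intro C k U _
    simp [circuit, Wop, Ccum_zero, List.ofFn_succ]
  | succ m IH =>
    intro C k U hC
    set E0 := embed (k 0) (U 0) with hE0
    set Ct : Fin (m + 1) → QMat n :=
      Fin.cases (C 1 * E0 * C 0) (fun j => C j.succ.succ) with hCt
    have hCts : Ct ∘ Fin.succ = (C ∘ Fin.succ) ∘ Fin.succ := by
      funext j; simp [hCt]
    have hCsu : ∀ j, (C ∘ Fin.succ) j ∈ Matrix.unitaryGroup (Fin n → Fin 2) ℂ :=
      fun j => hC j
    have hcirc : circuit C k U = circuit Ct (fun j => k j.succ) (fun j => U j.succ) := by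
      unfold circuit
      rw [List.ofFn_succ]
      simp only [List.reverse_cons, List.prod_append, List.prod_cons, List.prod_nil]
      have h0 : Ct 0 = C 1 * E0 * C 0 := rfl
      have hs : ∀ j : Fin m, Ct j.succ = C j.succ.succ := fun j => rfl
      simp only [h0, hs, mul_one, mul_assoc]
      rfl
    have hVsh : ∀ (j : Fin m) P, Vop Ct (fun j => k j.succ) j P = Vop C k j.succ P := by
      intro j P
      unfold Vop
      have : Ccum Ct j.succ = Ccum C j.succ.succ := by
        rw [Ccum_drop, Ccum_drop]
        rw [show ((j.succ : Fin (m+1)) : ℕ) = (j : ℕ) + 1 from rfl]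
        rw [show ((j.succ.succ : Fin (m+2)) : ℕ) = (j : ℕ) + 1 + 1 from rfl]
        rw [drop_ofFn_succ Ct, drop_ofFn_succ C, drop_ofFn_succ (C ∘ Fin.succ), hCts]
      rw [this]
    have hlist : (List.ofFn fun i : Fin (m+1) => Vop C k i (U i))
        = Vop C k 0 (U 0) ::
          List.ofFn (fun j : Fin m => Vop Ct (fun j => k j.succ) j (U j.succ)) := by
      rw [List.ofFn_succ]
      exact congrArg _ (congrArg List.ofFn (funext fun j => (hVsh j (U j.succ)).symm))
    have hWop : Wop C k U
        = Wop Ct (fun j => k j.succ) (fun j => U j.succ) * Vop C k 0 (U 0) := by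
      unfold Wop
      rw [hlist, List.reverse_cons, List.prod_append, List.prod_cons, List.prod_nil,
        mul_one]
    have hCc1 : Ccum C (0 : Fin (m+1)).succ = Ccum (C ∘ Fin.succ) 0 := by
      rw [Ccum_drop, Ccum_drop]
      rw [show (((0 : Fin (m+1)).succ : Fin (m+2)) : ℕ) = 0 + 1 from rfl]
      rw [drop_ofFn_succ C]
      rfl
    have hCcum0 : Ccum C 0 = Ccum (C ∘ Fin.succ) 0 * C 0 := Ccum_zero_succ C
    have hCtcum0 : Ccum Ct 0 = Ccum (C ∘ Fin.succ) 0 * E0 * C 0 := by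
      rw [Ccum_zero_cons Ct, hCts]
      have h0 : Ct 0 = C 1 * E0 * C 0 := rfl
      rw [h0]
      have : (List.ofFn ((C ∘ Fin.succ) ∘ Fin.succ)).reverse.prod * C 1
          = Ccum (C ∘ Fin.succ) 0 := by
        rw [Ccum_zero_cons (C ∘ Fin.succ)]
        rfl
      rw [← this]
      simp only [mul_assoc]
    have hu : (Ccum (C ∘ Fin.succ) 0)ᴴ * Ccum (C ∘ Fin.succ) 0 = 1 :=
      star_mul_self_of_mem (Ccum_mem _ hCsu 0)
    have key : Vop C k 0 (U 0) * Ccum C 0 = Ccum (C ∘ Fin.succ) 0 * E0 * C 0 := by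
      unfold Vop
      rw [hCc1, hCcum0]
      calc Ccum (C ∘ Fin.succ) 0 * E0 * (Ccum (C ∘ Fin.succ) 0)ᴴ *
            (Ccum (C ∘ Fin.succ) 0 * C 0)
          = Ccum (C ∘ Fin.succ) 0 * E0 *
              ((Ccum (C ∘ Fin.succ) 0)ᴴ * Ccum (C ∘ Fin.succ) 0) * C 0 := by
            simp only [mul_assoc]
        _ = Ccum (C ∘ Fin.succ) 0 * E0 * C 0 := by rw [hu, mul_one]
    rw [hcirc]
    rw [IH _ _ _ (fun j => hC j.succ)]
    rw [hWop]
    rw [hCtcum0]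
    rw [← key]
    rw [mul_assoc]

lemma Vop_smul {n m : ℕ} (C : Fin (m + 1) → QMat n) (k : Fin m → Fin n) (i : Fin m)
    (c : ℂ) (P : Matrix (Fin 2) (Fin 2) ℂ) :
    Vop C k i (c • P) = c • Vop C k i P := by
  unfold Vop
  rw [embed_smul]
  simp [Matrix.mul_smul, Matrix.smul_mul]

lemma Vop_add {n m : ℕ} (C : Fin (m + 1) → QMat n) (k : Fin m → Fin n) (i : Fin m)
    (P Q : Matrix (Fin 2) (Fin 2) ℂ) :
    Vop C k i (P + Q) = Vop C k i P + Vop C k i Q := by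
  unfold Vop
  rw [embed_add]
  simp [Matrix.add_mul, Matrix.mul_add]

lemma Vop_one {n m : ℕ} (C : Fin (m + 1) → QMat n) (k : Fin m → Fin n) (i : Fin m)
    (hC : ∀ t, C t ∈ Matrix.unitaryGroup (Fin n → Fin 2) ℂ) :
    Vop C k i 1 = 1 := by
  unfold Vop
  rw [embed_one, mul_one]
  exact mul_star_self_of_mem (Ccum_mem _ hC i.succ)

lemma Vop_mul {n m : ℕ} (C : Fin (m + 1) → QMat n) (k : Fin m → Fin n) (i : Fin m)
    (hC : ∀ t, C t ∈ Matrix.unitaryGroup (Fin n → Fin 2) ℂ)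
    (P Q : Matrix (Fin 2) (Fin 2) ℂ) :
    Vop C k i (P * Q) = Vop C k i P * Vop C k i Q := by
  unfold Vop
  rw [embed_mul]
  have hu : (Ccum C i.succ)ᴴ * Ccum C i.succ = 1 :=
    star_mul_self_of_mem (Ccum_mem _ hC i.succ)
  simp only [mul_assoc]
  rw [← mul_assoc ((Ccum C i.succ)ᴴ) (Ccum C i.succ), hu, one_mul]

lemma pauli_expand (A : Matrix (Fin 2) (Fin 2) ℂ) :
    A = ((A 0 0 + A 1 1) / 2) • (1 : Matrix (Fin 2) (Fin 2) ℂ)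
      + ((A 0 1 + A 1 0) / 2) • PX
      + (Complex.I * (A 0 1 - A 1 0) / 2) • PY
      + ((A 0 0 - A 1 1) / 2) • PZ := by
  ext i j
  fin_cases i <;> fin_cases j <;>
    simp [PX, PY, PZ, Matrix.one_apply, Complex.ext_iff] <;> ring_nf <;>
    simp [Complex.I_sq, Complex.ext_iff] <;> ring

lemma PY_eq : PY = Complex.I • (PX * PZ) := by
  ext i j
  fin_cases i <;> fin_cases j <;> simp [PX, PY, PZ, Matrix.mul_apply, Fin.sum_univ_two]

lemma PX_mem : PX ∈ Matrix.unitaryGroup (Fin 2) ℂ := by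
  constructor <;>
  · ext i j
    fin_cases i <;> fin_cases j <;>
      simp [PX, Matrix.mul_apply, Fin.sum_univ_two, Matrix.one_apply,
        Matrix.star_eq_conjTranspose, Matrix.conjTranspose_apply]

lemma PZ_mem : PZ ∈ Matrix.unitaryGroup (Fin 2) ℂ := by
  constructor <;>
  · ext i j
    fin_cases i <;> fin_cases j <;>
      simp [PZ, Matrix.mul_apply, Fin.sum_univ_two, Matrix.one_apply,
        Matrix.star_eq_conjTranspose, Matrix.conjTranspose_apply]

lemma PY_mem : PY ∈ Matrix.unitaryGroup (Fin 2) ℂ := by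
  constructor <;>
  · ext i j
    fin_cases i <;> fin_cases j <;>
      simp [PY, Matrix.mul_apply, Fin.sum_univ_two, Matrix.one_apply,
        Matrix.star_eq_conjTranspose, Matrix.conjTranspose_apply]

lemma pauli_mem (q : Fin 4) : pauli q ∈ Matrix.unitaryGroup (Fin 2) ℂ := by
  fin_cases q
  · exact Submonoid.one_mem _
  · exact PX_mem
  · exact PY_mem
  · exact PZ_mem

section PermProd

variable {M : Type*} [Monoid M]

lemma take_append_drop_succ {α : Type*} {m : ℕ} (f : Fin (m + 1) → α) (p : Fin (m + 1)) :
    (List.ofFn f).take p ++ (List.ofFn f).drop (p + 1) = List.ofFn (f ∘ p.succAbove) := by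
  have hple : (p : ℕ) ≤ m := Nat.le_of_lt_succ p.isLt
  apply List.ext_getElem
  · simp
    omega
  · intro j h1 h2
    simp only [List.length_append, List.length_take, List.length_drop,
      List.length_ofFn] at h1
    simp only [List.length_ofFn] at h2
    by_cases hj : j < (p : ℕ)
    · rw [List.getElem_append_left (by simp; omega)]
      simp only [List.getElem_take, List.getElem_ofFn, Function.comp_apply]
      congr 1
      rw [Fin.succAbove_of_castSucc_lt]
      · rfl
      · simpa [Fin.lt_iff_val_lt_val] using hj
    · rw [List.getElem_append_right (by simp; omega)]
      simp only [List.getElem_drop, List.length_take, List.length_ofFn,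
        List.getElem_ofFn, Function.comp_apply]
      congr 1
      rw [Fin.succAbove_of_le_castSucc]
      · apply Fin.ext
        simp [Fin.val_succ]
        omega
      · simp only [Fin.le_iff_val_le_val, Fin.coe_castSucc]
        omega

lemma prod_ofFn_comp_perm : ∀ (m : ℕ) (g : Fin m → M) (τ : Equiv.Perm (Fin m)),
    (∀ a b : Fin m, a < b → τ.symm b < τ.symm a → Commute (g a) (g b)) →
    (List.ofFn (g ∘ τ)).prod = (List.ofFn g).prod := by
  intro m
  induction m with
  | zero => intro g τ _; rfl
  | succ m IH =>
    intro g τ H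
    set p : Fin (m + 1) := τ.symm 0 with hp
    set l : List M := List.ofFn (g ∘ τ) with hl
    have hlen : l.length = m + 1 := by simp [hl]
    have hplen : (p : ℕ) < l.length := by rw [hlen]; exact p.isLt
    have hlp : l.drop (p : ℕ) = g 0 :: l.drop ((p : ℕ) + 1) := by
      rw [List.drop_eq_getElem_cons hplen]
      congr 1
      simp only [hl, List.getElem_ofFn, Function.comp_apply]
      congr 1
      rw [show (⟨(p : ℕ), by simpa [hl] using hplen⟩ : Fin (m+1)) = p from Fin.ext rfl]
      simp [hp]
    have hcomm : Commute (g 0) (l.take (p : ℕ)).prod := by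
      apply Commute.list_prod_right
      intro x hx
      obtain ⟨j, hj, hx'⟩ := List.getElem_of_mem hx
      have hjlt : j < (p : ℕ) := by
        have := hj
        simp only [List.length_take] at this
        omega
      have hjlt' : j < m + 1 := by omega
      have hxval : x = g (τ ⟨j, hjlt'⟩) := by
        rw [← hx', List.getElem_take]
        simp only [hl, List.getElem_ofFn, Function.comp_apply]
      have hne : τ ⟨j, hjlt'⟩ ≠ 0 := by
        intro hzero
        have : (⟨j, hjlt'⟩ : Fin (m+1)) = p := by
          rw [hp, ← hzero, Equiv.symm_apply_apply]
        rw [Fin.ext_iff] at this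
        simp at this
        omega
      have hlt0 : (0 : Fin (m+1)) < τ ⟨j, hjlt'⟩ := by
        exact lt_of_le_of_ne (Fin.zero_le _) (Ne.symm hne)
      have hinv : τ.symm (τ ⟨j, hjlt'⟩) < τ.symm 0 := by
        rw [Equiv.symm_apply_apply, ← hp]
        exact Fin.mk_lt_of_lt_val hjlt
      rw [hxval]
      exact H 0 (τ ⟨j, hjlt'⟩) hlt0 hinv
    have hsplit : l.prod = g 0 * (List.ofFn (g ∘ τ ∘ p.succAbove)).prod := by
      conv_lhs => rw [← List.take_append_drop (p : ℕ) l, hlp]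
      rw [List.prod_append, List.prod_cons, ← mul_assoc, ← hcomm.eq, mul_assoc,
        ← List.prod_append]
      congr 2
      exact take_append_drop_succ (g ∘ ⇑τ) p
    -- construct the restricted permutation
    have hne0 : ∀ j : Fin m, τ (p.succAbove j) ≠ 0 := by
      intro j hzero
      have h2 : p.succAbove j = τ.symm 0 := by
        rw [← hzero, Equiv.symm_apply_apply]
      exact Fin.succAbove_ne p j (h2.trans hp.symm)
    set t : Fin m → Fin m := fun j => (τ (p.succAbove j)).pred (hne0 j) with ht
    have htinj : Function.Injective t := by
      intro a b hab
      have h3 : τ (p.succAbove a) = τ (p.succAbove b) := by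
        rw [← Fin.succ_pred (τ (p.succAbove a)) (hne0 a),
          ← Fin.succ_pred (τ (p.succAbove b)) (hne0 b)]
        exact congrArg Fin.succ hab
      exact (Fin.succAbove_right_injective) (τ.injective h3)
    set τ' : Equiv.Perm (Fin m) :=
      Equiv.ofBijective t (Finite.injective_iff_bijective.mp htinj) with hτ'
    have hτ'app : ∀ j, (τ' j).succ = τ (p.succAbove j) := by
      intro j
      simp [hτ', Equiv.ofBijective_apply, ht, Fin.succ_pred]
    have hsymm : ∀ a : Fin m, p.succAbove (τ'.symm a) = τ.symm a.succ := by
      intro a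
      apply τ.injective
      rw [← hτ'app (τ'.symm a), Equiv.apply_symm_apply, Equiv.apply_symm_apply]
    have Hres : ∀ a b : Fin m, a < b → τ'.symm b < τ'.symm a →
        Commute ((g ∘ Fin.succ) a) ((g ∘ Fin.succ) b) := by
      intro a b hab hinv
      apply H a.succ b.succ (by simpa [Fin.succ_lt_succ_iff] using hab)
      rw [← hsymm a, ← hsymm b]
      exact Fin.succAbove_lt_succAbove_iff.mpr hinv
    have hfun : g ∘ τ ∘ p.succAbove = (g ∘ Fin.succ) ∘ τ' := by
      funext j
      simp only [Function.comp_apply]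
      rw [← hτ'app j]
    rw [hsplit, hfun, IH _ τ' Hres, List.ofFn_succ, List.prod_cons]
    rfl

end PermProd

section RevProd

variable {M : Type*} [Monoid M]

lemma ofFn_reverse {α : Type*} {m : ℕ} (h : Fin m → α) :
    (List.ofFn h).reverse = List.ofFn (h ∘ Fin.rev) := by
  apply List.ext_getElem
  · simp
  · intro j h1 h2
    simp only [List.length_reverse, List.length_ofFn] at h1
    rw [List.getElem_reverse, List.getElem_ofFn, List.getElem_ofFn]
    simp only [Function.comp_apply, List.length_ofFn]
    congr 1
    apply Fin.ext
    simp only [Fin.rev]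
    omega

lemma revProd_ofFn_comp_perm {m : ℕ} (f : Fin m → M) (σ : Equiv.Perm (Fin m))
    (H : ∀ r r' : Fin m, r < r' → σ.symm r' < σ.symm r → Commute (f r) (f r')) :
    (List.ofFn (fun j => f (σ j))).reverse.prod = (List.ofFn f).reverse.prod := by
  rw [ofFn_reverse, ofFn_reverse]
  set τ : Equiv.Perm (Fin m) := (Fin.revPerm.trans σ).trans Fin.revPerm with hτ
  have hgt : (fun j => f (σ j)) ∘ Fin.rev = (f ∘ Fin.rev) ∘ τ := by
    funext j
    simp [hτ, Fin.rev_rev]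
  rw [hgt]
  apply prod_ofFn_comp_perm m (f ∘ Fin.rev) τ
  intro a b hab hinv
  have hinv' : σ.symm (Fin.rev a) < σ.symm (Fin.rev b) := by
    have : Fin.rev (σ.symm (Fin.rev b)) < Fin.rev (σ.symm (Fin.rev a)) := by
      simpa [hτ, Fin.rev_rev] using hinv
    exact (Fin.rev_lt_rev).mp this
  have hba : Fin.rev b < Fin.rev a := Fin.rev_lt_rev.mpr hab
  exact (H (Fin.rev b) (Fin.rev a) hba hinv').symm

lemma revProd_succ {m : ℕ} (f : Fin (m + 1) → M) :
    (List.ofFn f).reverse.prod = (List.ofFn (f ∘ Fin.succ)).reverse.prod * f 0 := by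
  rw [List.ofFn_succ, List.reverse_cons, List.prod_append, List.prod_cons, List.prod_nil,
    mul_one]
  rfl

lemma revProd_all_one : ∀ {m : ℕ} (f : Fin m → M), (∀ t, f t = 1) →
    (List.ofFn f).reverse.prod = 1 := by
  intro m
  induction m with
  | zero => intro f _; rfl
  | succ m IH =>
    intro f h
    rw [revProd_succ, h 0, mul_one]
    exact IH _ (fun t => h t.succ)

lemma revProd_single : ∀ {m : ℕ} (f : Fin m → M) (a : Fin m),
    (∀ t, t ≠ a → f t = 1) → (List.ofFn f).reverse.prod = f a := by
  intro m
  induction m with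
  | zero => intro f a; exact absurd a.isLt (by omega)
  | succ m IH =>
    intro f a h
    rw [revProd_succ]
    rcases Fin.eq_zero_or_eq_succ a with rfl | ⟨a', rfl⟩
    · rw [revProd_all_one (f ∘ Fin.succ) (fun t => h t.succ (Fin.succ_ne_zero t)), one_mul]
    · rw [h 0 (Ne.symm (Fin.succ_ne_zero a')), mul_one]
      exact IH (f ∘ Fin.succ) a' (fun t ht => h t.succ (by simpa using ht))

lemma revProd_pair : ∀ {m : ℕ} (f : Fin m → M) (a b : Fin m), a < b →
    (∀ t, t ≠ a → t ≠ b → f t = 1) → (List.ofFn f).reverse.prod = f b * f a := by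
  intro m
  induction m with
  | zero => intro f a; exact absurd a.isLt (by omega)
  | succ m IH =>
    intro f a b hab h
    have hb0 : b ≠ 0 := by
      intro hb
      rw [hb] at hab
      exact absurd hab (by simp [Fin.lt_iff_val_lt_val])
    obtain ⟨b', rfl⟩ := Fin.eq_succ_of_ne_zero hb0
    rw [revProd_succ]
    rcases Fin.eq_zero_or_eq_succ a with rfl | ⟨a', rfl⟩
    · rw [revProd_single (f ∘ Fin.succ) b'
        (fun t ht => h t.succ (Fin.succ_ne_zero t) (by simpa using ht))]
      rfl
    · rw [h 0 (Ne.symm (Fin.succ_ne_zero a')) (Ne.symm (Fin.succ_ne_zero b')), mul_one]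
      exact IH (f ∘ Fin.succ) a' b' (by simpa [Fin.succ_lt_succ_iff] using hab)
        (fun t ht1 ht2 => h t.succ (by simpa using ht1) (by simpa using ht2))

end RevProd

lemma mul_right_cancel_unitary {N : Type*} [Fintype N] [DecidableEq N]
    {c : Matrix N N ℂ} (hc : c ∈ Matrix.unitaryGroup N ℂ) {a b : Matrix N N ℂ}
    (h : a * c = b * c) : a = b := by
  have := congrArg (· * cᴴ) h
  simpa [mul_assoc, mul_star_self_of_mem hc] using this

lemma Vop_eq_all {n m : ℕ} (C C' : Fin (m + 1) → QMat n)
    (hC : ∀ i, C i ∈ Matrix.unitaryGroup (Fin n → Fin 2) ℂ)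
    (hC' : ∀ i, C' i ∈ Matrix.unitaryGroup (Fin n → Fin 2) ℂ)
    (k l : Fin m → Fin n) (i j : Fin m)
    (hX : Vop C k i PX = Vop C' l j PX) (hZ : Vop C k i PZ = Vop C' l j PZ)
    (A : Matrix (Fin 2) (Fin 2) ℂ) : Vop C k i A = Vop C' l j A := by
  have hY : Vop C k i PY = Vop C' l j PY := by
    rw [PY_eq, Vop_smul, Vop_smul, Vop_mul C k i hC, Vop_mul C' l j hC', hX, hZ]
  rw [pauli_expand A]
  simp only [Vop_add, Vop_smul, Vop_one C k i hC, Vop_one C' l j hC', hX, hZ, hY]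

lemma commute_smul_left {N : Type*} [Fintype N] [DecidableEq N]
    (c : ℂ) {a b : Matrix N N ℂ} (h : Commute a b) : Commute (c • a) b := by
  unfold Commute SemiconjBy at h ⊢
  rw [Matrix.smul_mul, Matrix.mul_smul, h]

lemma commute_smul_right {N : Type*} [Fintype N] [DecidableEq N]
    (c : ℂ) {a b : Matrix N N ℂ} (h : Commute a b) : Commute a (c • b) := by
  unfold Commute SemiconjBy at h ⊢
  rw [Matrix.smul_mul, Matrix.mul_smul, h]

lemma commute_of_pauli_commute {n m : ℕ} (C : Fin (m + 1) → QMat n)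
    (k : Fin m → Fin n) (r r' : Fin m)
    (h : ∀ q q' : Fin 4, Vop C k r (pauli q) * Vop C k r' (pauli q') =
      Vop C k r' (pauli q') * Vop C k r (pauli q))
    (A B : Matrix (Fin 2) (Fin 2) ℂ) :
    Commute (Vop C k r A) (Vop C k r' B) := by
  have hp : ∀ q q' : Fin 4, Commute (Vop C k r (pauli q)) (Vop C k r' (pauli q')) :=
    fun q q' => h q q'
  have e0 : (1 : Matrix (Fin 2) (Fin 2) ℂ) = pauli 0 := rfl
  have e1 : PX = pauli 1 := rfl
  have e2 : PY = pauli 2 := rfl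
  have e3 : PZ = pauli 3 := rfl
  have hA : ∀ q' : Fin 4, Commute (Vop C k r A) (Vop C k r' (pauli q')) := by
    intro q'
    rw [pauli_expand A]
    simp only [Vop_add, Vop_smul, e0, e1, e2, e3]
    exact Commute.add_left (Commute.add_left (Commute.add_left
      (commute_smul_left _ (hp 0 q')) (commute_smul_left _ (hp 1 q')))
      (commute_smul_left _ (hp 2 q'))) (commute_smul_left _ (hp 3 q'))
  rw [pauli_expand B]
  simp only [Vop_add, Vop_smul, e0, e1, e2, e3]
  exact Commute.add_right (Commute.add_right (Commute.add_right
    (commute_smul_right _ (hA 0)) (commute_smul_right _ (hA 1)))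
    (commute_smul_right _ (hA 2))) (commute_smul_right _ (hA 3))

set_option maxHeartbeats 1000000 in
/-- Assuming all layers are Clifford, there exists a phase `φ` with
`F'(U⃗_σ) = e^{iφ} F(U⃗)` for every sequence of 2×2 unitaries iff there exists `φ` with
(a) `C'_{m:0} = e^{iφ} C_{m:0}`; (b) `V_i(X) = V'_j(X)` and `V_i(Z) = V'_j(Z)` whenever
`σ(j) = i`; and (c) `V_r(P)` and `V_{r'}(P')` commute for every inversion pair
`r < r'`, `σ⁻¹(r) > σ⁻¹(r')`, and all `P, P' ∈ 𝒫`. -/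
theorem stmt16 (n m : ℕ) (hn : 1 ≤ n) (hm : 1 ≤ m)
    (C C' : Fin (m + 1) → QMat n)
    (hC : ∀ i, C i ∈ Matrix.unitaryGroup (Fin n → Fin 2) ℂ)
    (hC' : ∀ i, C' i ∈ Matrix.unitaryGroup (Fin n → Fin 2) ℂ)
    (hCc : ∀ i, IsClifford (C i)) (hCc' : ∀ i, IsClifford (C' i))
    (k l : Fin m → Fin n) (σ : Equiv.Perm (Fin m)) :
    (∃ φ : ℝ, ∀ U : Fin m → Matrix (Fin 2) (Fin 2) ℂ,
        (∀ i, U i ∈ Matrix.unitaryGroup (Fin 2) ℂ) →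
        circuit C' l (fun i => U (σ i)) = phase φ • circuit C k U) ↔
    (∃ φ : ℝ,
      Ccum C' 0 = phase φ • Ccum C 0 ∧
      (∀ i j : Fin m, σ j = i →
        Vop C k i PX = Vop C' l j PX ∧ Vop C k i PZ = Vop C' l j PZ) ∧
      (∀ r r' : Fin m, r < r' → σ.symm r' < σ.symm r → ∀ q q' : Fin 4,
        Vop C k r (pauli q) * Vop C k r' (pauli q') =
          Vop C k r' (pauli q') * Vop C k r (pauli q))) := by
  have fact : ∀ U, circuit C k U = Wop C k U * Ccum C 0 :=
    fun U => circuit_eq_Wop C k U (fun i => hC i.succ)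
  have fact' : ∀ U, circuit C' l U = Wop C' l U * Ccum C' 0 :=
    fun U => circuit_eq_Wop C' l U (fun i => hC' i.succ)
  have hCcum0 : Ccum C 0 ∈ Matrix.unitaryGroup (Fin n → Fin 2) ℂ := Ccum_mem C hC 0
  constructor
  · rintro ⟨φ, hφ⟩
    have hphase : phase φ ≠ 0 := Complex.exp_ne_zero _
    -- (a)
    have ha : Ccum C' 0 = phase φ • Ccum C 0 := by
      have h1 := hφ (fun _ => 1) (fun _ => Submonoid.one_mem _)
      rw [fact, fact'] at h1
      have w1 : Wop C k (fun _ => 1) = 1 := by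
        unfold Wop
        exact revProd_all_one _ (fun t => Vop_one C k t hC)
      have w2 : Wop C' l (fun i => (fun _ => (1 : Matrix (Fin 2) (Fin 2) ℂ)) (σ i)) = 1 := by
        unfold Wop
        exact revProd_all_one _ (fun t => Vop_one C' l t hC')
      rw [w1, w2, one_mul, one_mul] at h1
      exact h1
    -- W' = W for all unitary U
    have hW : ∀ U : Fin m → Matrix (Fin 2) (Fin 2) ℂ,
        (∀ i, U i ∈ Matrix.unitaryGroup (Fin 2) ℂ) →
        Wop C' l (fun i => U (σ i)) = Wop C k U := by
      intro U hU
      have h2 := hφ U hU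
      rw [fact, fact', ha] at h2
      rw [mul_smul_comm] at h2
      have h3 := smul_right_injective _ hphase h2
      exact mul_right_cancel_unitary hCcum0 h3
    -- pointwise V equality for unitary A
    have hVall : ∀ (i j : Fin m), σ j = i →
        ∀ A ∈ Matrix.unitaryGroup (Fin 2) ℂ, Vop C k i A = Vop C' l j A := by
      intro i j hji A hA
      set U : Fin m → Matrix (Fin 2) (Fin 2) ℂ := fun t => if t = i then A else 1 with hUdef
      have hU : ∀ t, U t ∈ Matrix.unitaryGroup (Fin 2) ℂ := by
        intro t
        by_cases ht : t = i <;> simp [hUdef, ht, hA, Submonoid.one_mem]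
      have w1 : Wop C k U = Vop C k i A := by
        unfold Wop
        have := revProd_single (fun t => Vop C k t (U t)) i ?_
        · rw [this]
          simp [hUdef]
        · intro t ht
          simp only [hUdef, if_neg ht]
          exact Vop_one C k t hC
      have w2 : Wop C' l (fun t => U (σ t)) = Vop C' l j A := by
        unfold Wop
        have := revProd_single (fun t => Vop C' l t (U (σ t))) j ?_
        · rw [this]
          simp [hUdef, hji]
        · intro t ht
          have : σ t ≠ i := by
            rw [← hji]
            exact fun hcon => ht (σ.injective hcon)
          simp only [hUdef, if_neg this]
          exact Vop_one C' l t hC'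
      rw [← w1, ← w2, hW U hU]
    refine ⟨φ, ha, ?_, ?_⟩
    · intro i j hji
      exact ⟨hVall i j hji PX PX_mem, hVall i j hji PZ PZ_mem⟩
    · intro r r' hrr' hinv q q'
      set j1 := σ.symm r with hj1
      set j2 := σ.symm r' with hj2
      have hσ1 : σ j1 = r := Equiv.apply_symm_apply σ r
      have hσ2 : σ j2 = r' := Equiv.apply_symm_apply σ r'
      have hne : r ≠ r' := ne_of_lt hrr'
      have hne12 : j2 ≠ j1 := ne_of_lt hinv
      set A := pauli q with hA
      set B := pauli q' with hB
      set U : Fin m → Matrix (Fin 2) (Fin 2) ℂ :=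
        fun t => if t = r then A else if t = r' then B else 1 with hUdef
      have hU : ∀ t, U t ∈ Matrix.unitaryGroup (Fin 2) ℂ := by
        intro t
        by_cases h1 : t = r
        · simpa [hUdef, h1] using pauli_mem q
        by_cases h2 : t = r'
        · simpa [hUdef, h1, h2, Ne.symm hne] using pauli_mem q'
        · simp [hUdef, h1, h2, Submonoid.one_mem]
      have hUr : U r = A := by simp [hUdef]
      have hUr' : U r' = B := by simp [hUdef, Ne.symm hne]
      have w1 : Wop C k U = Vop C k r' B * Vop C k r A := by
        unfold Wop
        have := revProd_pair (fun t => Vop C k t (U t)) r r' hrr' ?_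
        · rw [this]
          simp only [hUr, hUr']
        · intro t ht1 ht2
          simp only [hUdef, if_neg ht1, if_neg ht2]
          exact Vop_one C k t hC
      have w2 : Wop C' l (fun t => U (σ t)) = Vop C' l j1 A * Vop C' l j2 B := by
        unfold Wop
        have := revProd_pair (fun t => Vop C' l t (U (σ t))) j2 j1 hinv ?_
        · rw [this]
          simp only [hσ1, hσ2, hUr, hUr']
        · intro t ht2 ht1
          have hs1 : σ t ≠ r := by
            rw [← hσ1]; exact fun hcon => ht1 (σ.injective hcon)
          have hs2 : σ t ≠ r' := by
            rw [← hσ2]; exact fun hcon => ht2 (σ.injective hcon)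
          simp only [hUdef, if_neg hs1, if_neg hs2]
          exact Vop_one C' l t hC'
      have heq := hW U hU
      rw [w1, w2] at heq
      rw [hVall r j1 hσ1 A (pauli_mem q), hVall r' j2 hσ2 B (pauli_mem q')] at heq
      rw [hVall r j1 hσ1 A (pauli_mem q), hVall r' j2 hσ2 B (pauli_mem q')]
      exact heq
  · rintro ⟨φ, ha, hb, hc⟩
    refine ⟨φ, ?_⟩
    intro U hU
    have hVgen : ∀ (i : Fin m) (A : Matrix (Fin 2) (Fin 2) ℂ),
        Vop C k i A = Vop C' l (σ.symm i) A := by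
      intro i A
      obtain ⟨hX, hZ⟩ := hb i (σ.symm i) (Equiv.apply_symm_apply σ i)
      exact Vop_eq_all C C' hC hC' k l i (σ.symm i) hX hZ A
    have hWeq : Wop C' l (fun t => U (σ t)) = Wop C k U := by
      unfold Wop
      have step1 : (List.ofFn fun t => Vop C' l t (U (σ t)))
          = List.ofFn fun t => Vop C k (σ t) (U (σ t)) := by
        apply congrArg List.ofFn
        funext t
        rw [hVgen (σ t) (U (σ t)), Equiv.symm_apply_apply]
      rw [step1]
      exact revProd_ofFn_comp_perm (fun i => Vop C k i (U i)) σ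
        (fun r r' hlt hinv =>
          commute_of_pauli_commute C k r r' (hc r r' hlt hinv) (U r) (U r'))
    rw [fact, fact', ha, hWeq, mul_smul_comm]
end QEC
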